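/- Let g : [0,∞) → (0,∞) be a positive increasing function with ∫_0^∞ 1/g(x) dx < ∞. Let (v_n) be a sequence of positive reals with partial sums A_n = ∑_{k≤n} v_k tending to infinity. Then ∑_n v_n / g(A_n) < ∞. -/

import Mathlib

open Filter MeasureTheory

theorem stmt_2 (g : ℝ → ℝ) (hgpos : ∀ x, 0 ≤ x → 0 < g x)
    (hgmono : MonotoneOn g (Set.Ici 0))
    (hgint : IntegrableOn (fun x => 1 / g x) (Set.Ici 0))
    (v : ℕ → ℝ) (hv : ∀ n, 0 < v n)
    (hA : Tendsto (fun n => ∑ k ∈ Finset.range (n + 1), v k) atTop atTop) :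
    Summable (fun n => v n / g (∑ k ∈ Finset.range (n + 1), v k)) := by
  set S : ℕ → ℝ := fun n => ∑ k ∈ Finset.range n, v k with hSdef
  have hSnonneg : ∀ n, 0 ≤ S n := fun n =>
    Finset.sum_nonneg fun k _ => (hv k).le
  have hSmono : Monotone S := by
    intro a b hab
    exact Finset.sum_le_sum_of_subset_of_nonneg (Finset.range_subset_range.2 hab)
      (fun k _ _ => (hv k).le)
  have hstep : ∀ n, S (n + 1) = S n + v n := by
    intro n; simp [hSdef, Finset.sum_range_succ]
  have hIcc : ∀ n, Set.Icc (S n) (S (n + 1)) ⊆ Set.Ici (0 : ℝ) := by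
    intro n x hx
    exact le_trans (hSnonneg n) hx.1
  have hii : ∀ n, IntervalIntegrable (fun x => 1 / g x) volume (S n) (S (n + 1)) := by
    intro n
    rw [intervalIntegrable_iff_integrableOn_Icc_of_le (hSmono (Nat.le_succ n))]
    exact hgint.mono_set (hIcc n)
  -- key bound: each term ≤ integral over [S n, S (n+1)]
  have hkey : ∀ n, v n / g (S (n + 1)) ≤ ∫ x in (S n)..(S (n + 1)), 1 / g x := by
    intro n
    have hle : S n ≤ S (n + 1) := hSmono (Nat.le_succ n)
    have hconst : ∫ x in (S n)..(S (n + 1)), (1 / g (S (n + 1))) =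
        (S (n + 1) - S n) * (1 / g (S (n + 1))) := by
      simp [intervalIntegral.integral_const, smul_eq_mul]
    have hmono : ∫ x in (S n)..(S (n + 1)), (1 / g (S (n + 1))) ≤
        ∫ x in (S n)..(S (n + 1)), 1 / g x := by
      apply intervalIntegral.integral_mono_on hle (intervalIntegrable_const) (hii n)
      intro x hx
      have hx0 : (0:ℝ) ≤ x := le_trans (hSnonneg n) hx.1
      have hgx : 0 < g x := hgpos x hx0
      have : g x ≤ g (S (n + 1)) := hgmono (Set.mem_Ici.2 hx0)
        (Set.mem_Ici.2 (hSnonneg (n + 1))) hx.2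
      exact one_div_le_one_div_of_le hgx this
    have heq : v n / g (S (n + 1)) = (S (n + 1) - S n) * (1 / g (S (n + 1))) := by
      rw [hstep n]; ring
    rw [heq, ← hconst]
    exact hmono
  have hnonneg : ∀ n, 0 ≤ v n / g (S (n + 1)) := by
    intro n
    exact div_nonneg (hv n).le (hgpos _ (hSnonneg _)).le
  -- nonnegativity of 1/g on Ici 0
  have h1g_nonneg : ∀ x ∈ Set.Ici (0:ℝ), 0 ≤ 1 / g x := by
    intro x hx
    exact (one_div_pos.2 (hgpos x hx)).le
  apply summable_of_sum_range_le hnonneg (c := ∫ x in Set.Ici (0:ℝ), 1 / g x)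
  intro n
  calc ∑ i ∈ Finset.range n, v i / g (S (i + 1))
      ≤ ∑ i ∈ Finset.range n, ∫ x in (S i)..(S (i + 1)), 1 / g x :=
        Finset.sum_le_sum fun i _ => hkey i
    _ = ∫ x in (S 0)..(S n), 1 / g x :=
        intervalIntegral.sum_integral_adjacent_intervals fun i _ => hii i
    _ = ∫ x in Set.Ioc (0:ℝ) (S n), 1 / g x := by
        rw [intervalIntegral.integral_of_le (by simpa [hSdef] using hSnonneg n)]
        simp [hSdef]
    _ ≤ ∫ x in Set.Ici (0:ℝ), 1 / g x := by
        apply setIntegral_mono_set hgint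
        · filter_upwards [ae_restrict_mem measurableSet_Ici] with x hx
          exact h1g_nonneg x hx
        · exact HasSubset.Subset.eventuallyLE (Set.Ioc_subset_Icc_self.trans Set.Icc_subset_Ici_self)
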